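/- Let π : E → B be a Serre fibration and let C = C_*(E;k) with the Serre filtration F^p = ⊕_q T^{p,q}, where T^{p,q} ⊆ C_{p+q} is generated by singular simplices that are q-degenerate with respect to π. Then the Alexander–Whitney comultiplication Δ : C → C⊗C satisfies Δ(F^p) ⊆ G^p = Σ_{a+b=p} F^a ⊗ F^b, i.e., Δ is a morphism of filtered complexes. -/

import Mathlib

open TensorProduct

noncomputable section

/-- The type of singular simplices of a topological space `X` (of all dimensions). -/
abbrev SSimp (X : Type) [TopologicalSpace X] : Type :=
  Σ n : ℕ, C(↥(SimplexCategory.toTop.obj (SimplexCategory.mk n)), X)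

/-- The (total) singular chains of `X` with coefficients in `k`: the free `k`-module
on the singular simplices of `X`. -/
abbrev Chains (k : Type) [Field k] (X : Type) [TopologicalSpace X] : Type :=
  SSimp X →₀ k

/-- The front face inclusion `[0,...,j] : Δ^j → Δ^n` in the simplex category. -/
def frontHom (j n : ℕ) (h : j ≤ n) : SimplexCategory.mk j ⟶ SimplexCategory.mk n :=
  SimplexCategory.mkHom
    ⟨fun i => ⟨i.1, by have := i.isLt; omega⟩, fun a b hab => by
      have h2 : (a : ℕ) ≤ b := hab
      simpa [Fin.mk_le_mk] using h2⟩

/-- The back face inclusion `[j,...,n] : Δ^{n-j} → Δ^n` in the simplex category. -/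
def backHom (j n : ℕ) (h : j ≤ n) : SimplexCategory.mk (n - j) ⟶ SimplexCategory.mk n :=
  SimplexCategory.mkHom
    ⟨fun i => ⟨i.1 + j, by have := i.isLt; omega⟩, fun a b hab => by
      have h2 : (a : ℕ) ≤ b := hab
      simpa [Fin.mk_le_mk] using h2⟩

/-- The Alexander–Whitney diagonal `Δ : C_*(X) → C_*(X) ⊗ C_*(X)`, defined on a singular
`n`-simplex `α` by `Δ(α) = Σ_{j=0}^{n} (α ∘ [0,...,j]) ⊗ (α ∘ [j,...,n])`. -/
def AW (k : Type) [Field k] (X : Type) [TopologicalSpace X] :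
    Chains k X →ₗ[k] Chains k X ⊗[k] Chains k X :=
  Finsupp.lift (Chains k X ⊗[k] Chains k X) k (SSimp X) (fun s =>
    ∑ j : Fin (s.1 + 1),
      (Finsupp.single
        (⟨j.1, s.2.comp (SimplexCategory.toTop.map (frontHom j.1 s.1 j.is_le)).hom⟩ : SSimp X)
        (1 : k))
      ⊗ₜ[k]
      (Finsupp.single
        (⟨s.1 - j.1, s.2.comp (SimplexCategory.toTop.map (backHom j.1 s.1 j.is_le)).hom⟩ : SSimp X)
        (1 : k)))


section Serre

variable (k : Type) [Field k]
variable (E B : Type) [TopologicalSpace E] [TopologicalSpace B] (f : C(E, B))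

/-- A singular simplex `α : Δ^n → E` lies in Serre filtration level `p` with respect to
`π : E → B` if `π ∘ α = α' ∘ s` for some codegeneracy (surjective monotone map)
`s : Δ^n → Δ^m` with `m ≤ p` and some singular simplex `α'` of `B`.  (For `m = n - i`
this says exactly that `α` is `i`-degenerate with respect to `π`.) -/
def SerreSet (p : ℕ) : Set (Chains k E) :=
  {z | ∃ (n : ℕ) (α : C(↥(SimplexCategory.toTop.obj (SimplexCategory.mk n)), E)),
    z = Finsupp.single (⟨n, α⟩ : SSimp E) (1 : k) ∧
    ∃ m : ℕ, m ≤ p ∧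
      ∃ s : SimplexCategory.mk n ⟶ SimplexCategory.mk m,
        Function.Surjective ⇑s.toOrderHom ∧
        ∃ α' : C(↥(SimplexCategory.toTop.obj (SimplexCategory.mk m)), B),
          ∀ x, f (α x) = α' (SimplexCategory.toTop.map s x)}

/-- The Serre filtration `F^p = ⊕_q T^{p,q}` of the singular chains of the total space
of a fibration, `T^{p,q}` being generated by the `(p+q)`-simplices that are
`q`-degenerate with respect to `π`. -/
def SerreFilt (p : ℕ) : Submodule k (Chains k E) :=
  Submodule.span k (SerreSet k E B f p)

open CategoryTheory

/-- Let `π : E → B` be a Serre fibration (here: a map with the homotopy lifting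
property with respect to all cubes) and let `C = C_*(E; k)` with the Serre filtration
`F^p`.  Then the Alexander-Whitney comultiplication `Δ : C → C ⊗ C` satisfies
`Δ(F^p) ⊆ G^p = Σ_{a+b=p} F^a ⊗ F^b`, i.e. `Δ` is a morphism of filtered complexes. -/
theorem statement15
    (hSerre : ∀ (n : ℕ) (h : C((Fin n → unitInterval) × unitInterval, B))
      (g₀ : C(Fin n → unitInterval, E)),
      (∀ x, f (g₀ x) = h (x, 0)) →
      ∃ H : C((Fin n → unitInterval) × unitInterval, E),
        (∀ z, f (H z) = h z) ∧ (∀ x, H (x, 0) = g₀ x)) :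
    ∀ p : ℕ,
      Submodule.map (AW k E) (SerreFilt k E B f p) ≤
        ⨆ (a : ℕ) (_ : a ≤ p),
          LinearMap.range (TensorProduct.map
            (SerreFilt k E B f a).subtype (SerreFilt k E B f (p - a)).subtype) := by
  intro p
  rw [Submodule.map_le_iff_le_comap, SerreFilt, Submodule.span_le]
  rintro z ⟨n, α, rfl, m, hm, s, hs, α', hα'⟩
  simp only [SetLike.mem_coe, Submodule.mem_comap]
  have hAW : AW k E (Finsupp.single (⟨n, α⟩ : SSimp E) (1 : k)) =
      ∑ j : Fin (n + 1),
      (Finsupp.single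
        (⟨j.1, α.comp (SimplexCategory.toTop.map (frontHom j.1 n j.is_le)).hom⟩ : SSimp E)
        (1 : k))
      ⊗ₜ[k]
      (Finsupp.single
        (⟨n - j.1, α.comp (SimplexCategory.toTop.map (backHom j.1 n j.is_le)).hom⟩ : SSimp E)
        (1 : k)) := by
    rw [AW, Finsupp.lift_apply, Finsupp.sum_single_index (by simp), one_smul]
  rw [hAW]
  apply Submodule.sum_mem
  intro j _
  set a : ℕ := ((s.toOrderHom j) : ℕ) with ha
  have haj : a ≤ m := Nat.lt_succ_iff.mp (s.toOrderHom j).2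
  have hap : a ≤ p := le_trans haj hm
  have hjn : j.1 ≤ n := j.is_le
  -- the front map t : [j] ⟶ [a]
  let t : SimplexCategory.mk j.1 ⟶ SimplexCategory.mk a :=
    SimplexCategory.mkHom
      ⟨fun i => by
          have hi : i.1 ≤ j.1 := Nat.lt_succ_iff.mp i.isLt
          have hb : (s.toOrderHom (⟨i.1, by omega⟩ : Fin (n + 1)) : ℕ) ≤ a :=
            s.toOrderHom.monotone (show (⟨i.1, by omega⟩ : Fin (n+1)) ≤ j from hi)
          exact (⟨(s.toOrderHom (⟨i.1, by omega⟩ : Fin (n + 1)) : ℕ), by omega⟩ : Fin (a + 1)),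
        fun u v huv => by
          have hu : u.1 ≤ j.1 := Nat.lt_succ_iff.mp u.isLt
          have hv : v.1 ≤ j.1 := Nat.lt_succ_iff.mp v.isLt
          have huv' : (u : ℕ) ≤ (v : ℕ) := huv
          have : s.toOrderHom (⟨u.1, by omega⟩ : Fin (n + 1)) ≤ s.toOrderHom (⟨v.1, by omega⟩ : Fin (n + 1)) :=
            s.toOrderHom.monotone huv'
          exact this⟩
  have hts : Function.Surjective ⇑t.toOrderHom := by
    intro v
    have hv : v.1 ≤ a := Nat.lt_succ_iff.mp v.isLt
    obtain ⟨i0, hi0⟩ := hs (⟨v.1, by omega⟩ : Fin (m + 1))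
    have h2 : (s.toOrderHom i0 : ℕ) = v.1 := congrArg Fin.val hi0
    by_cases hij : i0.1 ≤ j.1
    · refine ⟨⟨i0.1, Nat.lt_succ_iff.mpr hij⟩, Fin.ext ?_⟩
      show (s.toOrderHom ⟨i0.1, _⟩ : ℕ) = v.1
      have : (⟨i0.1, by omega⟩ : Fin (n + 1)) = i0 := rfl
      rw [this, h2]
    · have h1 : (s.toOrderHom j : ℕ) ≤ (s.toOrderHom i0 : ℕ) :=
        s.toOrderHom.monotone (show (j : ℕ) ≤ (i0 : ℕ) by omega)
      refine ⟨⟨j.1, Nat.lt_succ_iff.mpr le_rfl⟩, Fin.ext ?_⟩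
      show (s.toOrderHom ⟨j.1, _⟩ : ℕ) = v.1
      have : (⟨j.1, by omega⟩ : Fin (n + 1)) = j := rfl
      rw [this]
      omega
  have htc : frontHom j.1 n hjn ≫ s = t ≫ frontHom a m haj := by
    apply SimplexCategory.Hom.ext
    ext i
    show (s.toOrderHom ⟨i.1, _⟩ : ℕ) = ((s.toOrderHom ⟨i.1, _⟩ : ℕ) : ℕ)
    rfl
  -- the back map t' : [n - j] ⟶ [m - a]
  let t' : SimplexCategory.mk (n - j.1) ⟶ SimplexCategory.mk (m - a) :=
    SimplexCategory.mkHom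
      ⟨fun i => by
          have hi : i.1 ≤ n - j.1 := Nat.lt_succ_iff.mp i.isLt
          have hb : (s.toOrderHom (⟨i.1 + j.1, by omega⟩ : Fin (n + 1)) : ℕ) ≤ m :=
            Nat.lt_succ_iff.mp (s.toOrderHom (⟨i.1 + j.1, by omega⟩ : Fin (n + 1))).2
          exact (⟨(s.toOrderHom (⟨i.1 + j.1, by omega⟩ : Fin (n + 1)) : ℕ) - a, by omega⟩ : Fin (m - a + 1)),
        fun u v huv => by
          have hu : u.1 ≤ n - j.1 := Nat.lt_succ_iff.mp u.isLt
          have hv : v.1 ≤ n - j.1 := Nat.lt_succ_iff.mp v.isLt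
          have huv' : (u : ℕ) ≤ (v : ℕ) := huv
          have h1 : (s.toOrderHom (⟨u.1 + j.1, by omega⟩ : Fin (n + 1)) : ℕ) ≤
              (s.toOrderHom (⟨v.1 + j.1, by omega⟩ : Fin (n + 1)) : ℕ) :=
            s.toOrderHom.monotone (show u.1 + j.1 ≤ v.1 + j.1 by omega)
          show (s.toOrderHom ⟨u.1 + j.1, _⟩ : ℕ) - a ≤ (s.toOrderHom ⟨v.1 + j.1, _⟩ : ℕ) - a
          omega⟩
  have hts' : Function.Surjective ⇑t'.toOrderHom := by
    intro v
    have hv : v.1 ≤ m - a := Nat.lt_succ_iff.mp v.isLt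
    obtain ⟨i0, hi0⟩ := hs (⟨v.1 + a, by omega⟩ : Fin (m + 1))
    have h2 : (s.toOrderHom i0 : ℕ) = v.1 + a := congrArg Fin.val hi0
    by_cases hij : j.1 ≤ i0.1
    · have hi0n : i0.1 ≤ n := Nat.lt_succ_iff.mp i0.isLt
      refine ⟨(⟨i0.1 - j.1, by omega⟩ : Fin (n - j.1 + 1)), Fin.ext ?_⟩
      show (s.toOrderHom ⟨i0.1 - j.1 + j.1, _⟩ : ℕ) - a = v.1
      have : (⟨i0.1 - j.1 + j.1, by omega⟩ : Fin (n + 1)) = i0 := Fin.ext (show i0.1 - j.1 + j.1 = i0.1 by omega)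
      rw [this]
      omega
    · have h1 : (s.toOrderHom i0 : ℕ) ≤ (s.toOrderHom j : ℕ) :=
        s.toOrderHom.monotone (show (i0 : ℕ) ≤ (j : ℕ) by omega)
      refine ⟨(⟨0, by omega⟩ : Fin (n - j.1 + 1)), Fin.ext ?_⟩
      show (s.toOrderHom ⟨0 + j.1, _⟩ : ℕ) - a = v.1
      have : (⟨0 + j.1, by omega⟩ : Fin (n + 1)) = j := Fin.ext (show 0 + j.1 = j.1 by omega)
      rw [this]
      omega
  have htc' : backHom j.1 n hjn ≫ s = t' ≫ backHom a m haj := by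
    apply SimplexCategory.Hom.ext
    ext i
    have hi : i.1 ≤ n - j.1 := Nat.lt_succ_iff.mp i.isLt
    have h1 : a ≤ (s.toOrderHom (⟨i.1 + j.1, by omega⟩ : Fin (n + 1)) : ℕ) :=
      s.toOrderHom.monotone (show (j : ℕ) ≤ i.1 + j.1 by omega)
    show (s.toOrderHom ⟨i.1 + j.1, _⟩ : ℕ) =
      ((s.toOrderHom ⟨i.1 + j.1, _⟩ : ℕ) - a) + a
    omega
  -- memberships
  have hfront :
      (Finsupp.single
        (⟨j.1, α.comp (SimplexCategory.toTop.map (frontHom j.1 n j.is_le)).hom⟩ : SSimp E)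
        (1 : k)) ∈ SerreFilt k E B f a := by
    apply Submodule.subset_span
    refine ⟨j.1, _, rfl, a, le_rfl, t, hts,
      α'.comp (SimplexCategory.toTop.map (frontHom a m haj)).hom, ?_⟩
    intro x
    simp only [ContinuousMap.comp_apply]
    rw [hα']
    have h1 := congrArg (fun g => (SimplexCategory.toTop.map g) x) htc
    simp only [CategoryTheory.Functor.map_comp] at h1
    exact congrArg α' h1
  have hback :
      (Finsupp.single
        (⟨n - j.1, α.comp (SimplexCategory.toTop.map (backHom j.1 n j.is_le)).hom⟩ : SSimp E)
        (1 : k)) ∈ SerreFilt k E B f (p - a) := by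
    apply Submodule.subset_span
    refine ⟨n - j.1, _, rfl, m - a, by omega, t', hts',
      α'.comp (SimplexCategory.toTop.map (backHom a m haj)).hom, ?_⟩
    intro x
    simp only [ContinuousMap.comp_apply]
    rw [hα']
    have h1 := congrArg (fun g => (SimplexCategory.toTop.map g) x) htc'
    simp only [CategoryTheory.Functor.map_comp] at h1
    exact congrArg α' h1
  refine Submodule.mem_iSup_of_mem a (Submodule.mem_iSup_of_mem hap ?_)
  exact ⟨(⟨_, hfront⟩ : SerreFilt k E B f a) ⊗ₜ[k] (⟨_, hback⟩ : SerreFilt k E B f (p - a)),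
    by simp [TensorProduct.map_tmul]⟩

end Serre

end
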